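/- For any two subsets X, Y ⊆ ℕ, the right Cayley graphs (as semimetric spaces) of M(X) and M(Y) over the generating set {a,b,c,d,e} are isometric, via the identity map on the common set of normal forms. In particular, there exist finitely generated monoids with isometric Cayley graphs such that one has decidable word problem and the other does not. -/

import Mathlib

/-- The element of the monoid `M` represented by the word `w` over the alphabet `A`,
where `f : A → M` interprets the letters. -/
def wordProd {A M : Type*} [Monoid M] (f : A → M) (w : List A) : M := (w.map f).prod

/-- One application of a defining relation from `R`: replace a factor `s` by `t`
where `(s, t) ∈ R` or `(t, s) ∈ R`. -/
def OneStep {A : Type*} (R : Set (List A × List A)) (w w' : List A) : Prop :=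
  ∃ u s t v : List A, ((s, t) ∈ R ∨ (t, s) ∈ R) ∧ w = u ++ s ++ v ∧ w' = u ++ t ++ v

/-- `⟨A | R⟩` (via `f : A → M`) is a presentation of `M`: `f` generates `M` (every element
is represented by a word) and two words represent the same element of `M` exactly when
they are related by the congruence generated by `R`. -/
def Presents {A M : Type*} [Monoid M] (f : A → M) (R : Set (List A × List A)) : Prop :=
  Function.Surjective (wordProd f) ∧
    ∀ u v : List A, Relation.ReflTransGen (OneStep R) u v ↔ wordProd f u = wordProd f v

/-- An atomic homotopy in the directed 2-complex `K_n` of the right Cayley graph of `M`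
over `A`: a path in the Cayley graph starting at `x` and labelled `u ++ s ++ v` is replaced
by the path labelled `u ++ t ++ v`, where the subpaths labelled `s` and `t` starting at the
vertex `x * (u)` are parallel (same endpoints) and `|s| + |t| ≤ n`, i.e. they form a
2-cell of `K_n`. -/
def KStep {A M : Type*} [Monoid M] (f : A → M) (n : ℕ) (p q : M × List A) : Prop :=
  ∃ (x : M) (u s t v : List A),
    p = (x, u ++ s ++ v) ∧ q = (x, u ++ t ++ v) ∧
    x * wordProd f u * wordProd f s = x * wordProd f u * wordProd f t ∧
    s.length + t.length ≤ n

/-- Two paths in the right Cayley graph (given as a start vertex together with a label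
word over `A`) are homotopic in `K_n` if one can be transformed into the other by a finite
sequence of 2-cell replacements. -/
def Homotopic {A M : Type*} [Monoid M] (f : A → M) (n : ℕ) :
    M × List A → M × List A → Prop :=
  Relation.ReflTransGen (KStep f n)

/-- The right Cayley graph of `M` over `A` is `n`-quasi-simply-connected: every pair of
parallel paths (same start vertex `x`, same end vertex) is homotopic in `K_n`. -/
def NQSC {A M : Type*} [Monoid M] (f : A → M) (n : ℕ) : Prop :=
  ∀ (x : M) (w₁ w₂ : List A), x * wordProd f w₁ = x * wordProd f w₂ →
    Homotopic f n (x, w₁) (x, w₂)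

/-! The monoids `M(X)`. The alphabet `{a, b, c, d, e}` is modelled by `Fin 5`, with
`a = 0`, `b = 1`, `c = 2`, `d = 3`, `e = 4`. -/

/-- The word `a bⁱ c`. -/
def wABC (i : ℕ) : List (Fin 5) := 0 :: (List.replicate i 1 ++ [2])

/-- The word `a bⁱ d`. -/
def wABD (i : ℕ) : List (Fin 5) := 0 :: (List.replicate i 1 ++ [3])

/-- The word `a bⁱ e`. -/
def wABE (i : ℕ) : List (Fin 5) := 0 :: (List.replicate i 1 ++ [4])

/-- The defining relations of `M(X)`:
`a bⁱ c = a bⁱ d` for `i ∈ X` and `a bʲ c = a bʲ e` for `j ∉ X`. -/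
def MXRel (X : Set ℕ) : Set (List (Fin 5) × List (Fin 5)) :=
  {p | ∃ i : ℕ, (i ∈ X ∧ p = (wABC i, wABD i)) ∨ (i ∉ X ∧ p = (wABC i, wABE i))}

/-- One step of the rewriting system for `M(X)`:
`a bⁱ c → a bⁱ d` for `i ∈ X`, and `a bʲ c → a bʲ e` for `j ∉ X`. -/
def RWStep (X : Set ℕ) (w w' : List (Fin 5)) : Prop :=
  ∃ (u v : List (Fin 5)) (i : ℕ),
    (i ∈ X ∧ w = u ++ wABC i ++ v ∧ w' = u ++ wABD i ++ v) ∨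
    (i ∉ X ∧ w = u ++ wABC i ++ v ∧ w' = u ++ wABE i ++ v)

/-- The normal forms: words over `{a,b,c,d,e}` containing no factor `a bⁱ c`. -/
def MXNormal (w : List (Fin 5)) : Prop :=
  ¬∃ (u v : List (Fin 5)) (i : ℕ), w = u ++ wABC i ++ v

open scoped ENNReal

/-- The right Cayley graph semimetric on a monoid with respect to a generating set `S`. -/
noncomputable def cayleyDist {M : Type*} [Monoid M] (S : Set M) (x y : M) : ℝ≥0∞ :=
  sInf {c : ℝ≥0∞ | ∃ w : List M, (∀ s ∈ w, s ∈ S) ∧ x * w.prod = y ∧ c = (w.length : ℝ≥0∞)}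

namespace MXAux

abbrev A5 := Fin 5

/-! ### The normal form machine -/

def stStep : Option ℕ → A5 → Option ℕ := fun s l =>
  if l = 0 then some 0 else if l = 1 then s.map (· + 1) else none

def outLetter (p : ℕ → Bool) : Option ℕ → A5 → A5 := fun s l =>
  if l = 2 then (match s with | some i => if p i then 3 else 4 | none => 2) else l

def nfStep (p : ℕ → Bool) : Option ℕ × List A5 → A5 → Option ℕ × List A5 :=
  fun st l => (stStep st.1 l, outLetter p st.1 l :: st.2)

def nfAux (p : ℕ → Bool) (st : Option ℕ × List A5) (w : List A5) : Option ℕ × List A5 :=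
  w.foldl (nfStep p) st

def stRun (s : Option ℕ) (w : List A5) : Option ℕ := w.foldl stStep s

def NF (p : ℕ → Bool) (w : List A5) : List A5 := ((nfAux p (none, []) w).2).reverse

lemma nfAux_append (p st u v) : nfAux p st (u ++ v) = nfAux p (nfAux p st u) v :=
  List.foldl_append ..

lemma stRun_append (s u v) : stRun s (u ++ v) = stRun (stRun s u) v :=
  List.foldl_append ..

lemma nfAux_cons (p st l w) : nfAux p st (l :: w) = nfAux p (nfStep p st l) w := rfl

lemma nfAux_nil (p st) : nfAux p st [] = st := rfl

lemma nfAux_shape (p) : ∀ (w : List A5) (s o), nfAux p (s, o) w =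
    (stRun s w, (nfAux p (s, []) w).2 ++ o) := by
  intro w
  induction w with
  | nil => intro s o; simp [nfAux, stRun]
  | cons l w ih =>
    intro s o
    have hL : nfAux p (s, o) (l :: w) = nfAux p (stStep s l, outLetter p s l :: o) w := rfl
    have hR : (nfAux p (s, []) (l :: w)).2 = (nfAux p (stStep s l, []) w).2 ++ [outLetter p s l] := by
      have h0 : nfAux p (s, []) (l :: w) = nfAux p (stStep s l, [outLetter p s l]) w := rfl
      rw [h0, ih]
    rw [hL, ih, hR]
    have hs : stRun s (l :: w) = stRun (stStep s l) w := rfl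
    rw [hs, List.append_assoc]
    rfl

lemma nfAux_fst (p) (w : List A5) (s o) : (nfAux p (s, o) w).1 = stRun s w := by
  rw [nfAux_shape]

lemma stRun_replicate (i j) : stRun (some j) (List.replicate i 1) = some (j + i) := by
  induction i generalizing j with
  | zero => rfl
  | succ i ih =>
    rw [List.replicate_succ]
    show stRun (stStep (some j) 1) (List.replicate i 1) = _
    have : stStep (some j) 1 = some (j + 1) := by simp [stStep]
    rw [this, ih]
    congr 1
    omega

lemma nfAux_replicate (p) (i : ℕ) : ∀ (j o), nfAux p (some j, o) (List.replicate i 1) =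
    (some (j + i), List.replicate i 1 ++ o) := by
  induction i with
  | zero => intro j o; simp [nfAux]
  | succ i ih =>
    intro j o
    rw [List.replicate_succ, nfAux_cons]
    have h1 : nfStep p (some j, o) 1 = (some (j + 1), 1 :: o) := by
      simp [nfStep, stStep, outLetter]
    rw [h1, ih]
    have hl : List.replicate i (1 : A5) ++ 1 :: o = 1 :: (List.replicate i 1 ++ o) := by
      rw [show (1 : A5) :: o = [1] ++ o from rfl, ← List.append_assoc,
        ← List.replicate_succ' (n := i), List.replicate_succ]
      simp
    have : j + 1 + i = j + (i + 1) := by omega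
    rw [this, hl]
    rfl

lemma nfAux_wABC (p s o i) : nfAux p (s, o) (wABC i) =
    (none, (if p i then 3 else 4) :: (List.replicate i 1 ++ 0 :: o)) := by
  show nfAux p (nfStep p (s, o) 0) (List.replicate i 1 ++ [2]) = _
  have h0 : nfStep p (s, o) 0 = (some 0, 0 :: o) := by simp [nfStep, stStep, outLetter]
  rw [h0, nfAux_append, nfAux_replicate]
  simp [nfAux, nfStep, stStep, outLetter]

lemma nfAux_wABD (p s o i) : nfAux p (s, o) (wABD i) =
    (none, 3 :: (List.replicate i 1 ++ 0 :: o)) := by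
  show nfAux p (nfStep p (s, o) 0) (List.replicate i 1 ++ [3]) = _
  have h0 : nfStep p (s, o) 0 = (some 0, 0 :: o) := by simp [nfStep, stStep, outLetter]
  rw [h0, nfAux_append, nfAux_replicate]
  simp [nfAux, nfStep, stStep, outLetter]

lemma nfAux_wABE (p s o i) : nfAux p (s, o) (wABE i) =
    (none, 4 :: (List.replicate i 1 ++ 0 :: o)) := by
  show nfAux p (nfStep p (s, o) 0) (List.replicate i 1 ++ [4]) = _
  have h0 : nfStep p (s, o) 0 = (some 0, 0 :: o) := by simp [nfStep, stStep, outLetter]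
  rw [h0, nfAux_append, nfAux_replicate]
  simp [nfAux, nfStep, stStep, outLetter]

/-- Replacing the factor `a bⁱ c` by `a bⁱ d` (when `p i`) does not change the normal form. -/
lemma NF_rel_d (p u v i) (hi : p i = true) :
    NF p (u ++ wABC i ++ v) = NF p (u ++ wABD i ++ v) := by
  unfold NF
  rw [nfAux_append, nfAux_append, nfAux_append, nfAux_append]
  obtain ⟨s, o⟩ := nfAux p (none, []) u
  rw [nfAux_wABC, nfAux_wABD, hi]
  simp

lemma NF_rel_e (p u v i) (hi : p i = false) :
    NF p (u ++ wABC i ++ v) = NF p (u ++ wABE i ++ v) := by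
  unfold NF
  rw [nfAux_append, nfAux_append, nfAux_append, nfAux_append]
  obtain ⟨s, o⟩ := nfAux p (none, []) u
  rw [nfAux_wABC, nfAux_wABE, hi]
  simp

end MXAux
namespace MXAux

/-! ### Normal forms -/

lemma wABC_eq (i : ℕ) : wABC i = (0 :: List.replicate i 1) ++ [2] := by
  simp [wABC]

def NoPatSuf (w : List A5) : Prop := ¬∃ u i, w = u ++ 0 :: List.replicate i 1

lemma mxnormal_nil : MXNormal [] := by
  rintro ⟨u, v, i, h⟩
  have := congrArg List.length h
  simp [wABC] at this

lemma mxnormal_of_snoc {w : List A5} {l : A5} (h : MXNormal (w ++ [l])) : MXNormal w := by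
  rintro ⟨u, v, i, rfl⟩
  exact h ⟨u, v ++ [l], i, by simp⟩

lemma snoc_inj {x y : List A5} {a b : A5} (h : x ++ [a] = y ++ [b]) : x = y ∧ a = b := by
  have := List.append_inj' h (by simp)
  simpa using this

lemma NoPatSuf_snoc {w : List A5} {l : A5} (h0 : l ≠ 0) (h1 : l ≠ 1) :
    NoPatSuf (w ++ [l]) := by
  rintro ⟨u, i, h⟩
  cases i with
  | zero => exact h0 (snoc_inj h).2
  | succ j =>
    rw [List.replicate_succ'] at h
    rw [show u ++ 0 :: (List.replicate j 1 ++ [1]) = (u ++ 0 :: List.replicate j 1) ++ [1] by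
      simp] at h
    exact h1 (snoc_inj h).2

lemma NoPatSuf_snoc_b {w : List A5} (h : NoPatSuf w) : NoPatSuf (w ++ [1]) := by
  rintro ⟨u, i, hw⟩
  cases i with
  | zero => exact absurd (snoc_inj hw).2 (by decide)
  | succ j =>
    rw [List.replicate_succ'] at hw
    rw [show u ++ 0 :: (List.replicate j 1 ++ [1]) = (u ++ 0 :: List.replicate j 1) ++ [1] by
      simp] at hw
    exact h ⟨u, j, (snoc_inj hw).1⟩

lemma mxnormal_snoc {w : List A5} {l : A5} (hn : MXNormal w)
    (h : l = 2 → NoPatSuf w) : MXNormal (w ++ [l]) := by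
  rintro ⟨u, v, i, hw⟩
  rcases List.eq_nil_or_concat v with rfl | ⟨v', x, rfl⟩
  · rw [List.append_nil, wABC_eq, ← List.append_assoc] at hw
    obtain ⟨h1, h2⟩ := snoc_inj hw
    exact h h2 ⟨u, i, h1⟩
  · rw [List.concat_eq_append, show u ++ wABC i ++ (v' ++ [x]) = (u ++ wABC i ++ v') ++ [x] by
      simp] at hw
    exact hn ⟨u, v', i, (snoc_inj hw).1⟩

lemma stRun_none_some : ∀ {w : List A5} {i : ℕ}, stRun none w = some i →
    ∃ u, w = u ++ 0 :: List.replicate i 1 := by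
  intro w
  induction w using List.reverseRecOn with
  | nil => intro i h; simp [stRun] at h
  | append_singleton w l ih =>
    intro i h
    rw [stRun_append] at h
    fin_cases l
    · -- l = 0
      have : (some 0 : Option ℕ) = some i := h
      obtain rfl : (0 : ℕ) = i := Option.some_injective _ this
      exact ⟨w, by simp [stRun]⟩
    · -- l = 1
      have h' : (stRun none w).map (· + 1) = some i := h
      rcases hs : stRun none w with _ | j
      · rw [hs] at h'; simp at h'
      · rw [hs] at h'
        simp only [Option.map_some] at h'
        obtain rfl : j + 1 = i := Option.some_injective _ h'
        obtain ⟨u, rfl⟩ := ih hs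
        exact ⟨u, by rw [List.replicate_succ' (n := j)]; simp [stRun]⟩
    · exact absurd h (by simp [stStep, stRun])
    · exact absurd h (by simp [stStep, stRun])
    · exact absurd h (by simp [stStep, stRun])

lemma nfAux_of_normal (p) {w : List A5} (hw : MXNormal w) :
    nfAux p (none, []) w = (stRun none w, w.reverse) := by
  induction w using List.reverseRecOn with
  | nil => rfl
  | append_singleton w l ih =>
    rw [nfAux_append, ih (mxnormal_of_snoc hw), stRun_append]
    show (stStep (stRun none w) l, outLetter p (stRun none w) l :: w.reverse) = _
    have hout : outLetter p (stRun none w) l = l := by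
      by_cases h2 : l = 2
      · subst h2
        rcases hs : stRun none w with _ | i
        · simp [outLetter]
        · obtain ⟨u, rfl⟩ := stRun_none_some hs
          exact absurd ⟨u, [], i, by rw [wABC_eq]; simp⟩ hw
      · simp [outLetter, h2]
    rw [hout]
    simp [stRun]

lemma NF_fix (p) {w : List A5} (hw : MXNormal w) : NF p w = w := by
  rw [NF, nfAux_of_normal p hw, List.reverse_reverse]

lemma out_ne_two {p : ℕ → Bool} {s l} (h : l ≠ 2) : outLetter p s l = l := by
  simp [outLetter, h]

lemma out_eq_two {p : ℕ → Bool} {s l} (h : outLetter p s l = 2) : s = none := by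
  by_cases h2 : l = 2
  · subst h2
    rcases s with _ | j
    · rfl
    · by_cases hp : p j <;> simp [outLetter, hp] at h
  · rw [out_ne_two h2] at h; exact absurd h h2

lemma out_ne01 {p : ℕ → Bool} {s l} (h0 : l ≠ 0) (h1 : l ≠ 1) :
    outLetter p s l ≠ 0 ∧ outLetter p s l ≠ 1 := by
  by_cases h2 : l = 2
  · subst h2
    rcases s with _ | j
    · simp [outLetter]
    · by_cases hp : p j <;> simp [outLetter, hp]
  · rw [out_ne_two h2]; exact ⟨h0, h1⟩

lemma st_some {s : Option ℕ} {l : A5} {i : ℕ} (h : stStep s l = some i) :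
    (l = 0 ∧ i = 0) ∨ (l = 1 ∧ ∃ j, s = some j ∧ i = j + 1) := by
  by_cases h0 : l = 0
  · subst h0
    left
    refine ⟨rfl, ?_⟩
    have : (some 0 : Option ℕ) = some i := h
    exact (Option.some_injective _ this).symm
  · by_cases h1 : l = 1
    · subst h1
      right
      refine ⟨rfl, ?_⟩
      have h' : s.map (· + 1) = some i := by
        rw [← h]; simp [stStep, h0]
      rcases s with _ | j
      · simp at h'
      · simp only [Option.map_some] at h'
        exact ⟨j, rfl, (Option.some_injective _ h').symm⟩
    · rw [show stStep s l = none by simp [stStep, h0, h1]] at h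
      exact absurd h (by simp)

lemma st_none_b {s : Option ℕ} (h : stStep s 1 = none) : s = none := by
  rcases s with _ | j
  · rfl
  · rw [show stStep (some j) 1 = some (j + 1) by simp [stStep]] at h
    exact absurd h (by simp)

lemma nf_invariant (p) : ∀ (w : List A5) (s : Option ℕ) (o : List A5),
    MXNormal o.reverse →
    (∀ i, s = some i → ∃ u, o.reverse = u ++ 0 :: List.replicate i 1) →
    (s = none → NoPatSuf o.reverse) →
    MXNormal ((nfAux p (s, o) w).2.reverse) := by
  intro w
  induction w with
  | nil => intro s o h _ _; exact h
  | cons l w ih =>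
    intro s o hn hsome hnone
    rw [nfAux_cons]
    show MXNormal ((nfAux p (stStep s l, outLetter p s l :: o) w).2.reverse)
    have hrev : (outLetter p s l :: o).reverse = o.reverse ++ [outLetter p s l] := by simp
    apply ih (stStep s l) (outLetter p s l :: o)
    · rw [hrev]
      exact mxnormal_snoc hn (fun h => hnone (out_eq_two h))
    · intro i hi
      rw [hrev]
      rcases st_some hi with ⟨rfl, rfl⟩ | ⟨rfl, j, rfl, rfl⟩
      · exact ⟨o.reverse, by rw [out_ne_two (by decide)]; simp⟩
      · obtain ⟨u, hu⟩ := hsome j rfl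
        refine ⟨u, ?_⟩
        rw [out_ne_two (by decide), hu, List.replicate_succ' (n := j)]
        simp
    · intro hnew
      rw [hrev]
      by_cases h1 : l = 1
      · subst h1
        rw [out_ne_two (by decide)]
        exact NoPatSuf_snoc_b (hnone (st_none_b hnew))
      · by_cases h0 : l = 0
        · subst h0
          rw [show stStep s 0 = some 0 by simp [stStep]] at hnew
          exact absurd hnew (by simp)
        · obtain ⟨ha, hb⟩ := out_ne01 (p := p) (s := s) h0 h1
          exact NoPatSuf_snoc ha hb

lemma NF_normal (p) (w : List A5) : MXNormal (NF p w) := by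
  apply nf_invariant
  · exact mxnormal_nil
  · intro i hi; exact absurd hi (by simp)
  · intro _; rintro ⟨u, i, h⟩
    have := congrArg List.length h
    simp at this

end MXAux
namespace MXAux

/-! ### The rewriting relation -/

lemma onestep_symm {A : Type*} {R : Set (List A × List A)} : Symmetric (OneStep R) := by
  rintro w w' ⟨u, s, t, v, hr, rfl, rfl⟩
  exact ⟨u, t, s, v, hr.symm, rfl, rfl⟩

lemma rtg_symm {A : Type*} {R : Set (List A × List A)} {u v : List A}
    (h : Relation.ReflTransGen (OneStep R) u v) :
    Relation.ReflTransGen (OneStep R) v u :=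
  by haveI : Std.Symm (OneStep R) := ⟨fun _ _ h => onestep_symm h⟩; exact Std.Symm.symm _ _ h

lemma onestep_append_right {A : Type*} {R : Set (List A × List A)} {a b : List A} (v : List A)
    (h : OneStep R a b) : OneStep R (a ++ v) (b ++ v) := by
  obtain ⟨u₀, s, t, v₀, hr, rfl, rfl⟩ := h
  exact ⟨u₀, s, t, v₀ ++ v, hr, by simp, by simp⟩

lemma onestep_append_left {A : Type*} {R : Set (List A × List A)} {a b : List A} (u : List A)
    (h : OneStep R a b) : OneStep R (u ++ a) (u ++ b) := by
  obtain ⟨u₀, s, t, v₀, hr, rfl, rfl⟩ := h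
  exact ⟨u ++ u₀, s, t, v₀, hr, by simp, by simp⟩

lemma rtg_append_right {A : Type*} {R : Set (List A × List A)} {a b : List A} (v : List A)
    (h : Relation.ReflTransGen (OneStep R) a b) :
    Relation.ReflTransGen (OneStep R) (a ++ v) (b ++ v) :=
  Relation.ReflTransGen.lift (fun w => w ++ v) (fun _ _ h => onestep_append_right v h) _ _ h

lemma rtg_append_left {A : Type*} {R : Set (List A × List A)} {a b : List A} (u : List A)
    (h : Relation.ReflTransGen (OneStep R) a b) :
    Relation.ReflTransGen (OneStep R) (u ++ a) (u ++ b) :=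
  Relation.ReflTransGen.lift (fun w => u ++ w) (fun _ _ h => onestep_append_left u h) _ _ h

section WithX

variable {X : Set ℕ} {p : ℕ → Bool} (hp : ∀ i, p i = true ↔ i ∈ X)
include hp

lemma NF_of_onestep {w w' : List A5} (h : OneStep (MXRel X) w w') : NF p w = NF p w' := by
  obtain ⟨u, s, t, v, hr, rfl, rfl⟩ := h
  have key : ∀ s t : List A5, (s, t) ∈ MXRel X → NF p (u ++ s ++ v) = NF p (u ++ t ++ v) := by
    rintro s t ⟨i, ⟨hi, he⟩ | ⟨hi, he⟩⟩
    · simp only [Prod.mk.injEq] at he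
      obtain ⟨rfl, rfl⟩ := he
      exact NF_rel_d p u v i ((hp i).2 hi)
    · simp only [Prod.mk.injEq] at he
      obtain ⟨rfl, rfl⟩ := he
      exact NF_rel_e p u v i (by
        rcases hb : p i with _ | _
        · rfl
        · exact absurd ((hp i).1 hb) hi)
  rcases hr with hr | hr
  · exact key s t hr
  · exact (key t s hr).symm

lemma NF_of_rtg {w w' : List A5} (h : Relation.ReflTransGen (OneStep (MXRel X)) w w') :
    NF p w = NF p w' := by
  induction h with
  | refl => rfl
  | tail _ h2 ih => exact ih.trans (NF_of_onestep hp h2)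

omit hp in
lemma count_wABC (i : ℕ) : (wABC i).count 2 = 1 := by
  simp [wABC, List.count_cons, List.count_append, List.count_replicate]

omit hp in
lemma count_wABD (i : ℕ) : (wABD i).count 2 = 0 := by
  simp [wABD, List.count_cons, List.count_append, List.count_replicate]

omit hp in
lemma count_wABE (i : ℕ) : (wABE i).count 2 = 0 := by
  simp [wABE, List.count_cons, List.count_append, List.count_replicate]

lemma to_NF_aux : ∀ (n : ℕ) (w : List A5), w.count 2 ≤ n →
    Relation.ReflTransGen (OneStep (MXRel X)) w (NF p w) := by
  intro n
  induction n with
  | zero =>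
    intro w hc
    by_cases h : MXNormal w
    · rw [NF_fix p h]
    · obtain ⟨u, v, i, rfl⟩ := not_not.1 h
      rw [List.count_append, List.count_append, count_wABC] at hc
      omega
  | succ n ih =>
    intro w hc
    by_cases h : MXNormal w
    · rw [NF_fix p h]
    · obtain ⟨u, v, i, rfl⟩ := not_not.1 h
      rw [List.count_append, List.count_append, count_wABC] at hc
      by_cases hx : i ∈ X
      · have hstep : OneStep (MXRel X) (u ++ wABC i ++ v) (u ++ wABD i ++ v) :=
          ⟨u, wABC i, wABD i, v, Or.inl ⟨i, Or.inl ⟨hx, rfl⟩⟩, rfl, rfl⟩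
        have hNF := NF_rel_d p u v i ((hp i).2 hx)
        have hc' : (u ++ wABD i ++ v).count 2 ≤ n := by
          rw [List.count_append, List.count_append, count_wABD]; omega
        exact Relation.ReflTransGen.head hstep (hNF ▸ ih _ hc')
      · have hstep : OneStep (MXRel X) (u ++ wABC i ++ v) (u ++ wABE i ++ v) :=
          ⟨u, wABC i, wABE i, v, Or.inl ⟨i, Or.inr ⟨hx, rfl⟩⟩, rfl, rfl⟩
        have hNF := NF_rel_e p u v i (by
          rcases hb : p i with _ | _
          · rfl
          · exact absurd ((hp i).1 hb) hx)
        have hc' : (u ++ wABE i ++ v).count 2 ≤ n := by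
          rw [List.count_append, List.count_append, count_wABE]; omega
        exact Relation.ReflTransGen.head hstep (hNF ▸ ih _ hc')

lemma to_NF (w : List A5) : Relation.ReflTransGen (OneStep (MXRel X)) w (NF p w) :=
  to_NF_aux hp _ w le_rfl

lemma rtg_iff_NF {u v : List A5} :
    Relation.ReflTransGen (OneStep (MXRel X)) u v ↔ NF p u = NF p v := by
  constructor
  · exact NF_of_rtg hp
  · intro h
    exact (to_NF hp u).trans (h ▸ rtg_symm (to_NF hp v))

lemma wp_iff {M : Type} [Monoid M] {f : Fin 5 → M} (hf : Presents f (MXRel X))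
    {u v : List A5} : wordProd f u = wordProd f v ↔ NF p u = NF p v := by
  rw [← hf.2 u v]
  exact rtg_iff_NF hp

end WithX

lemma NF_append_congr (p : ℕ → Bool) {u u' : List A5} (v : List A5)
    (h : NF p u = NF p u') : NF p (u ++ v) = NF p (u' ++ v) := by
  have hp : ∀ i, p i = true ↔ i ∈ {j | p j = true} := fun i => Iff.rfl
  have h1 : Relation.ReflTransGen (OneStep (MXRel {j | p j = true})) u u' :=
    (rtg_iff_NF hp).2 h
  exact NF_of_rtg hp (rtg_append_right v h1)

/-! ### Path transport between the two Cayley graphs -/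

lemma out_idem (p q : ℕ → Bool) (s : Option ℕ) (l : A5) :
    outLetter q s (outLetter p s l) = outLetter p s l := by
  by_cases h : outLetter p s l = 2
  · rw [h, out_eq_two h]
    simp [outLetter]
  · exact out_ne_two h

lemma NF_snoc_normal (p : ℕ → Bool) {n : List A5} (hn : MXNormal n) (l : A5) :
    NF p (n ++ [l]) = n ++ [outLetter p (stRun none n) l] := by
  rw [NF, nfAux_append, nfAux_of_normal p hn]
  show (nfAux p (stRun none n, n.reverse) [l]).2.reverse = _
  show (outLetter p (stRun none n) l :: n.reverse).reverse = _
  rw [List.reverse_cons, List.reverse_reverse]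

lemma path_transport (p q : ℕ → Bool) :
    ∀ (w : List A5) {n : List A5}, MXNormal n →
    ∃ w' : List A5, w'.length = w.length ∧ NF q (n ++ w') = NF p (n ++ w) := by
  intro w
  induction w with
  | nil =>
    intro n hn
    exact ⟨[], rfl, by simp only [List.append_nil]; rw [NF_fix q hn, NF_fix p hn]⟩
  | cons l w ih =>
    intro n hn
    obtain ⟨l', hq1⟩ : ∃ l', NF q (n ++ [l']) = NF p (n ++ [l]) := by
      refine ⟨outLetter p (stRun none n) l, ?_⟩
      rw [NF_snoc_normal q hn, NF_snoc_normal p hn, out_idem]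
    have hnorm : MXNormal (NF p (n ++ [l])) := NF_normal p _
    obtain ⟨w'', hlen, hW⟩ := ih hnorm
    refine ⟨l' :: w'', by simp [hlen], ?_⟩
    have e1 : n ++ l' :: w'' = (n ++ [l']) ++ w'' := by simp
    have e2 : n ++ l :: w = (n ++ [l]) ++ w := by simp
    rw [e1, e2,
      NF_append_congr q w'' (show NF q (n ++ [l']) = NF q (NF p (n ++ [l])) by
        rw [hq1, NF_fix q hnorm]),
      NF_append_congr p w (show NF p (n ++ [l]) = NF p (NF p (n ++ [l])) by
        rw [NF_fix p hnorm])]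
    exact hW

end MXAux
namespace MXAux

/-! ### Word products -/

lemma wordProd_cons {M : Type*} [Monoid M] (f : Fin 5 → M) (l : A5) (w : List A5) :
    wordProd f (l :: w) = f l * wordProd f w := by
  simp [wordProd]

lemma wordProd_append {M : Type*} [Monoid M] (f : Fin 5 → M) (u v : List A5) :
    wordProd f (u ++ v) = wordProd f u * wordProd f v := by
  simp [wordProd]

lemma exists_word {M : Type*} [Monoid M] {f : Fin 5 → M} :
    ∀ (w : List M), (∀ s ∈ w, s ∈ Set.range f) → ∃ ws : List A5, ws.map f = w := by
  intro w
  induction w with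
  | nil => intro _; exact ⟨[], rfl⟩
  | cons x w ih =>
    intro h
    obtain ⟨ws, hws⟩ := ih (fun s hs => h s (List.mem_cons_of_mem _ hs))
    obtain ⟨l, hl⟩ := h x (List.mem_cons_self (a := x) (l := w))
    exact ⟨l :: ws, by rw [List.map_cons, hws, hl]⟩

/-! ### The isomorphism -/

section Iso

variable {X Y : Set ℕ} {p q : ℕ → Bool} {M N : Type} [Monoid M] [Monoid N]
  {f : Fin 5 → M} {g : Fin 5 → N}

noncomputable def rep (hf : Presents f (MXRel X)) (p : ℕ → Bool) (m : M) : List A5 :=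
  NF p (Function.surjInv hf.1 m)

lemma rep_normal (hf : Presents f (MXRel X)) (p : ℕ → Bool) (m : M) :
    MXNormal (rep hf p m) := NF_normal p _

variable (hp : ∀ i, p i = true ↔ i ∈ X) (hq : ∀ i, q i = true ↔ i ∈ Y)
include hp

lemma wordProd_rep (hf : Presents f (MXRel X)) (m : M) :
    wordProd f (rep hf p m) = m := by
  have h2 : wordProd f (rep hf p m) = wordProd f (Function.surjInv hf.1 m) :=
    (wp_iff hp hf).2 (by rw [rep, NF_fix p (NF_normal p _)])
  rw [h2, Function.surjInv_eq hf.1 m]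

lemma rep_eq (hf : Presents f (MXRel X)) {u : List A5} {m : M}
    (h : wordProd f u = m) : rep hf p m = NF p u := by
  have h1 : wordProd f (rep hf p m) = wordProd f u := by
    rw [wordProd_rep hp hf, h]
  have := (wp_iff hp hf).1 h1
  rwa [rep, NF_fix p (NF_normal p _)] at this

noncomputable def phi (hf : Presents f (MXRel X)) (p : ℕ → Bool) (g : Fin 5 → N) : M → N :=
  fun m => wordProd g (rep hf p m)

lemma phi_wordProd (hf : Presents f (MXRel X)) {w : List A5} (hw : MXNormal w) :
    phi hf p g (wordProd f w) = wordProd g w := by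
  rw [phi, rep_eq hp hf rfl, NF_fix p hw]

include hq in
lemma phi_phi (hf : Presents f (MXRel X)) (hg : Presents g (MXRel Y)) (m : M) :
    phi hg q f (phi hf p g m) = m := by
  rw [phi, phi, rep_eq hq hg rfl, NF_fix q (rep_normal hf p m), wordProd_rep hp hf]

include hq in
lemma dist_subset (hf : Presents f (MXRel X)) (hg : Presents g (MXRel Y)) (x y : M)
    (c : ℝ≥0∞)
    (hc : c ∈ {c : ℝ≥0∞ | ∃ w : List M, (∀ s ∈ w, s ∈ Set.range f) ∧ x * w.prod = y ∧
      c = (w.length : ℝ≥0∞)}) :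
    c ∈ {c : ℝ≥0∞ | ∃ w : List N, (∀ s ∈ w, s ∈ Set.range g) ∧
      phi hf p g x * w.prod = phi hf p g y ∧ c = (w.length : ℝ≥0∞)} := by
  obtain ⟨w, hmem, hxy, rfl⟩ := hc
  obtain ⟨ws, rfl⟩ := exists_word w hmem
  have h1 : wordProd f (rep hf p x ++ ws) = y := by
    rw [wordProd_append, wordProd_rep hp hf]
    exact hxy
  have h2 : rep hf p y = NF p (rep hf p x ++ ws) := rep_eq hp hf h1
  obtain ⟨ws', hlen, hNF⟩ := path_transport p q ws (rep_normal hf p x)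
  have h3 : wordProd g (rep hf p x ++ ws') = wordProd g (rep hf p y) := by
    apply (wp_iff hq hg).2
    rw [hNF, NF_fix q (rep_normal hf p y)]
    exact h2.symm
  refine ⟨ws'.map g, ?_, ?_, ?_⟩
  · intro s hs
    obtain ⟨l, _, rfl⟩ := List.mem_map.1 hs
    exact ⟨l, rfl⟩
  · show phi hf p g x * wordProd g ws' = phi hf p g y
    rw [phi, phi, ← wordProd_append]
    exact h3
  · simp [hlen]

include hq in
lemma cayley_eq (hf : Presents f (MXRel X)) (hg : Presents g (MXRel Y)) (x y : M) :
    cayleyDist (Set.range f) x y =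
      cayleyDist (Set.range g) (phi hf p g x) (phi hf p g y) := by
  rw [cayleyDist, cayleyDist]
  congr 1
  apply Set.Subset.antisymm
  · exact fun c hc => dist_subset hp hq hf hg x y c hc
  · intro c hc
    have := dist_subset hq hp hg hf (phi hf p g x) (phi hf p g y) c hc
    rwa [phi_phi hp hq hf hg, phi_phi hp hq hf hg] at this

end Iso

lemma main_iso {X Y : Set ℕ} {M N : Type} [Monoid M] [Monoid N]
    (f : Fin 5 → M) (g : Fin 5 → N)
    (hf : Presents f (MXRel X)) (hg : Presents g (MXRel Y)) :
    ∃ φ : M ≃ N,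
      (∀ w : List (Fin 5), MXNormal w → φ (wordProd f w) = wordProd g w) ∧
      ∀ x y : M, cayleyDist (Set.range f) x y = cayleyDist (Set.range g) (φ x) (φ y) := by
  classical
  set p : ℕ → Bool := fun i => decide (i ∈ X) with hpdef
  set q : ℕ → Bool := fun i => decide (i ∈ Y) with hqdef
  have hp : ∀ i, p i = true ↔ i ∈ X := fun i => decide_eq_true_iff
  have hq : ∀ i, q i = true ↔ i ∈ Y := fun i => decide_eq_true_iff
  refine ⟨⟨phi hf p g, phi hg q f, fun m => phi_phi hp hq hf hg m,
    fun n => phi_phi hq hp hg hf n⟩, ?_, ?_⟩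
  · intro w hw
    exact phi_wordProd hp hf hw
  · intro x y
    exact cayley_eq hp hq hf hg x y

end MXAux
namespace MXAux

/-! ### The quotient monoids `M(X)` -/

def mxSetoid (X : Set ℕ) : Setoid (List A5) :=
  ⟨Relation.ReflTransGen (OneStep (MXRel X)),
    ⟨fun _ => Relation.ReflTransGen.refl, fun h => rtg_symm h,
      fun h1 h2 => Relation.ReflTransGen.trans h1 h2⟩⟩

def MXQ (X : Set ℕ) : Type := Quotient (mxSetoid X)

instance (X : Set ℕ) : Monoid (MXQ X) where
  mul a b := Quotient.map₂ (· ++ ·)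
    (by
      intro u u' hu v v' hv
      exact Relation.ReflTransGen.trans (rtg_append_right v hu) (rtg_append_left u' hv)) a b
  one := Quotient.mk (mxSetoid X) []
  mul_assoc a b c := Quotient.inductionOn₃ a b c fun u v w =>
    congrArg (Quotient.mk (mxSetoid X)) (List.append_assoc u v w)
  one_mul a := Quotient.inductionOn a fun u => congrArg (Quotient.mk (mxSetoid X)) rfl
  mul_one a := Quotient.inductionOn a fun u =>
    congrArg (Quotient.mk (mxSetoid X)) (List.append_nil u)

def mxMk (X : Set ℕ) : List A5 → MXQ X := Quotient.mk (mxSetoid X)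

def mxGen (X : Set ℕ) : Fin 5 → MXQ X := fun i => mxMk X [i]

lemma mxq_mul_mk (X : Set ℕ) (u v : List A5) :
    mxMk X u * mxMk X v = mxMk X (u ++ v) := rfl

lemma wordProd_mxGen (X : Set ℕ) (w : List A5) :
    wordProd (mxGen X) w = mxMk X w := by
  induction w with
  | nil => rfl
  | cons l w ih =>
    rw [wordProd_cons, ih, mxGen, mxq_mul_mk]
    rfl

lemma presents_mxq (X : Set ℕ) : Presents (mxGen X) (MXRel X) := by
  constructor
  · intro m
    induction m using Quotient.inductionOn with
    | h w => exact ⟨w, wordProd_mxGen X w⟩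
  · intro u v
    rw [wordProd_mxGen, wordProd_mxGen]
    exact ⟨fun h => Quotient.sound h, fun h => Quotient.exact h⟩

/-! ### The word problem -/

lemma normal_of_no_c {w : List A5} (h : (2 : A5) ∉ w) : MXNormal w := by
  rintro ⟨u, v, i, rfl⟩
  apply h
  have : (2 : A5) ∈ wABC i := by rw [wABC_eq]; simp
  simp [this]

lemma wABD_normal (i : ℕ) : MXNormal (wABD i) := by
  apply normal_of_no_c
  intro h
  rw [wABD] at h
  rcases List.mem_cons.1 h with h | h
  · exact absurd h (by decide)
  · rcases List.mem_append.1 h with h | h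
    · exact absurd (List.eq_of_mem_replicate h) (by decide)
    · rcases List.mem_singleton.1 h with h
      exact absurd h (by decide)

lemma wABE_normal (i : ℕ) : MXNormal (wABE i) := by
  apply normal_of_no_c
  intro h
  rw [wABE] at h
  rcases List.mem_cons.1 h with h | h
  · exact absurd h (by decide)
  · rcases List.mem_append.1 h with h | h
    · exact absurd (List.eq_of_mem_replicate h) (by decide)
    · rcases List.mem_singleton.1 h with h
      exact absurd h (by decide)

lemma wABD_ne_wABE (i : ℕ) : wABD i ≠ wABE i := by
  intro h
  have h' : (0 :: List.replicate i 1) ++ [3] = (0 :: List.replicate i 1) ++ [(4 : A5)] := by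
    simpa [wABD, wABE] using h
  exact absurd (snoc_inj h').2 (by decide)

lemma key_iff {X : Set ℕ} {p : ℕ → Bool} (hp : ∀ i, p i = true ↔ i ∈ X)
    {M : Type} [Monoid M] {g : Fin 5 → M} (hg : Presents g (MXRel X)) (n : ℕ) :
    (wordProd g (wABC n) = wordProd g (wABD n)) ↔ n ∈ X := by
  rw [wp_iff hp hg]
  constructor
  · intro h
    by_contra hx
    have hpn : p n = false := by
      rcases hb : p n with _ | _
      · rfl
      · exact absurd ((hp n).1 hb) hx
    have h1 : NF p (wABC n) = NF p (wABE n) := by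
      have := NF_rel_e p [] [] n hpn
      simp at this ⊢; exact this
    rw [h1, NF_fix p (wABE_normal n), NF_fix p (wABD_normal n)] at h
    exact wABD_ne_wABE n h.symm
  · intro hx
    have := NF_rel_d p [] [] n ((hp n).2 hx)
    simpa using this

end MXAux
namespace MXAux

/-! ### Computability -/

def pFalse : ℕ → Bool := fun _ => false

lemma primrec_stStep : Primrec (fun x : Option ℕ × A5 => stStep x.1 x.2) := by
  have h : Primrec (fun x : Option ℕ × A5 =>
      if x.2 = 0 then some 0 else if x.2 = 1 then x.1.map (· + 1) else none) :=
    Primrec.ite (Primrec.eq.comp Primrec.snd (Primrec.const 0))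
      (Primrec.const (some 0))
      (Primrec.ite (Primrec.eq.comp Primrec.snd (Primrec.const 1))
        (Primrec.option_map Primrec.fst (Primrec.succ.comp Primrec.snd).to₂)
        (Primrec.const none))
  exact h.of_eq fun x => rfl

lemma primrec_outLetter : Primrec (fun x : Option ℕ × A5 => outLetter pFalse x.1 x.2) := by
  have h : Primrec (fun x : Option ℕ × A5 =>
      if x.2 = 2 then (Option.casesOn x.1 2 fun _ => (4 : A5)) else x.2) :=
    Primrec.ite (Primrec.eq.comp Primrec.snd (Primrec.const 2))
      (Primrec.option_casesOn Primrec.fst (Primrec.const 2) (Primrec.const 4).to₂)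
      Primrec.snd
  apply h.of_eq
  intro ⟨s, l⟩
  by_cases h2 : l = 2
  · subst h2
    rcases s with _ | j <;> simp [outLetter, pFalse]
  · simp [outLetter, h2]

lemma primrec_nfStep : Primrec (fun x : (Option ℕ × List A5) × A5 => nfStep pFalse x.1 x.2) := by
  have h1 : Primrec (fun x : (Option ℕ × List A5) × A5 => stStep x.1.1 x.2) :=
    primrec_stStep.comp (Primrec.pair (Primrec.fst.comp Primrec.fst) Primrec.snd)
  have h2 : Primrec (fun x : (Option ℕ × List A5) × A5 => outLetter pFalse x.1.1 x.2) :=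
    primrec_outLetter.comp (Primrec.pair (Primrec.fst.comp Primrec.fst) Primrec.snd)
  exact (h1.pair (Primrec.list_cons.comp h2 (Primrec.snd.comp Primrec.fst))).of_eq
    fun x => rfl

lemma primrec_NF : Primrec (NF pFalse) := by
  have h : Primrec (fun w : List A5 => nfAux pFalse (none, []) w) := by
    have := Primrec.list_foldl (f := fun w : List A5 => w)
      (g := fun _ : List A5 => ((none, []) : Option ℕ × List A5))
      (h := fun _ x => nfStep pFalse x.1 x.2)
      Primrec.id (Primrec.const _) (primrec_nfStep.comp Primrec.snd).to₂
    exact this.of_eq fun w => rfl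
  exact Primrec.list_reverse.comp (Primrec.snd.comp h)

lemma wp_empty_computable : ComputablePred (fun pr : List (Fin 5) × List (Fin 5) =>
    wordProd (mxGen ∅) pr.1 = wordProd (mxGen ∅) pr.2) := by
  have hp : ∀ i, pFalse i = true ↔ i ∈ (∅ : Set ℕ) := by simp [pFalse]
  have hiff : ∀ pr : List A5 × List A5,
      (wordProd (mxGen ∅) pr.1 = wordProd (mxGen ∅) pr.2) ↔ NF pFalse pr.1 = NF pFalse pr.2 :=
    fun pr => wp_iff hp (presents_mxq ∅)
  apply ComputablePred.computable_iff.2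
  refine ⟨fun pr => decide (NF pFalse pr.1 = NF pFalse pr.2), ?_, ?_⟩
  · have : PrimrecPred (fun pr : List A5 × List A5 => NF pFalse pr.1 = NF pFalse pr.2) :=
      Primrec.eq.comp (primrec_NF.comp Primrec.fst) (primrec_NF.comp Primrec.snd)
    obtain ⟨_, h⟩ := this
    convert h.to_comp
  · funext pr
    exact propext ((hiff pr).trans decide_eq_true_iff.symm)

def Yhalt : Set ℕ := {n | (Nat.Partrec.Code.eval (Denumerable.ofNat Nat.Partrec.Code n) 0).Dom}

lemma Yhalt_not_computable : ¬ComputablePred (fun n => n ∈ Yhalt) := by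
  intro h
  apply ComputablePred.halting_problem 0
  obtain ⟨b, hb, hpb⟩ := ComputablePred.computable_iff.1 h
  apply ComputablePred.computable_iff.2
  refine ⟨fun c => b (Encodable.encode c), hb.comp Computable.encode, ?_⟩
  funext c
  have h1 : (Encodable.encode c ∈ Yhalt) = (b (Encodable.encode c) : Prop) :=
    congrFun hpb (Encodable.encode c)
  rw [← h1]
  simp [Yhalt, Denumerable.ofNat_encode]

lemma primrec_wABC : Primrec wABC := by
  have hrep : Primrec (fun n : ℕ => List.replicate n (1 : A5)) := by
    have := Primrec.list_map Primrec.list_range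
      ((Primrec.const (1 : A5)).comp Primrec.snd).to₂
    apply this.of_eq
    intro n
    rw [List.map_const', List.length_range]
  exact Primrec.list_cons.comp (Primrec.const 0)
    (Primrec.list_append.comp hrep (Primrec.const [2]))

lemma primrec_wABD : Primrec wABD := by
  have hrep : Primrec (fun n : ℕ => List.replicate n (1 : A5)) := by
    have := Primrec.list_map Primrec.list_range
      ((Primrec.const (1 : A5)).comp Primrec.snd).to₂
    apply this.of_eq
    intro n
    rw [List.map_const', List.length_range]
  exact Primrec.list_cons.comp (Primrec.const 0)
    (Primrec.list_append.comp hrep (Primrec.const [3]))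

lemma wp_Yhalt_not_computable : ¬ComputablePred (fun pr : List (Fin 5) × List (Fin 5) =>
    wordProd (mxGen Yhalt) pr.1 = wordProd (mxGen Yhalt) pr.2) := by
  classical
  intro hC
  apply Yhalt_not_computable
  obtain ⟨b, hb, hpb⟩ := ComputablePred.computable_iff.1 hC
  apply ComputablePred.computable_iff.2
  refine ⟨fun n => b (wABC n, wABD n), hb.comp (primrec_wABC.pair primrec_wABD).to_comp, ?_⟩
  funext n
  have h1 : (wordProd (mxGen Yhalt) (wABC n) = wordProd (mxGen Yhalt) (wABD n)) =
      (b (wABC n, wABD n) : Prop) := congrFun hpb (wABC n, wABD n)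
  rw [← h1]
  have hq : ∀ i, decide (i ∈ Yhalt) = true ↔ i ∈ Yhalt := fun i => decide_eq_true_iff
  exact propext (key_iff hq (presents_mxq Yhalt) n).symm

end MXAux
/-- For any `X, Y ⊆ ℕ`, the right Cayley graphs of `M(X)` and `M(Y)` over `{a,b,c,d,e}` are
isometric, via the bijection induced by the identity map on the common set of normal
forms. In particular, there exist finitely generated monoids with isometric Cayley graphs
such that one has decidable word problem and the other does not. -/
theorem stmt_17 (X Y : Set ℕ) {M N : Type} [Monoid M] [Monoid N]
    (f : Fin 5 → M) (g : Fin 5 → N)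
    (hf : Presents f (MXRel X)) (hg : Presents g (MXRel Y)) :
    (∃ φ : M ≃ N,
      (∀ w : List (Fin 5), MXNormal w → φ (wordProd f w) = wordProd g w) ∧
      ∀ x y : M, cayleyDist (Set.range f) x y = cayleyDist (Set.range g) (φ x) (φ y)) ∧
    (∃ (M' N' : Type) (iM : Monoid M') (iN : Monoid N')
        (f' : Fin 5 → M') (g' : Fin 5 → N') (X' Y' : Set ℕ),
      @Presents _ _ iM f' (MXRel X') ∧ @Presents _ _ iN g' (MXRel Y') ∧
      (∃ φ : M' ≃ N', ∀ x y : M',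
        @cayleyDist _ iM (Set.range f') x y =
          @cayleyDist _ iN (Set.range g') (φ x) (φ y)) ∧
      ComputablePred (fun p : List (Fin 5) × List (Fin 5) =>
        @wordProd _ _ iM f' p.1 = @wordProd _ _ iM f' p.2) ∧
      ¬ComputablePred (fun p : List (Fin 5) × List (Fin 5) =>
        @wordProd _ _ iN g' p.1 = @wordProd _ _ iN g' p.2)) := by
  constructor
  · exact MXAux.main_iso f g hf hg
  · refine ⟨MXAux.MXQ ∅, MXAux.MXQ MXAux.Yhalt, inferInstance, inferInstance,
      MXAux.mxGen ∅, MXAux.mxGen MXAux.Yhalt, ∅, MXAux.Yhalt,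
      MXAux.presents_mxq ∅, MXAux.presents_mxq MXAux.Yhalt, ?_, ?_, ?_⟩
    · obtain ⟨φ, _, hd⟩ := MXAux.main_iso (MXAux.mxGen ∅) (MXAux.mxGen MXAux.Yhalt)
        (MXAux.presents_mxq ∅) (MXAux.presents_mxq MXAux.Yhalt)
      exact ⟨φ, hd⟩
    · exact MXAux.wp_empty_computable
    · exact MXAux.wp_Yhalt_not_computable
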